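/- Let ω₀ > 0, C₀ ∈ ℝ, h ∈ ℝ, and set g₂ = (16/3)ω₀² - 4h and g₃ = 4C₀² - (8/3)ω₀h + (64/27)ω₀³. If v(t) satisfies (dv/dt)² = 4v³ - g₂v - g₃ and q(t)² = (2/3)ω₀ + v(t) with q(t) ≠ 0, then q satisfies (dq/dt)² = -2ω₀q² + q⁴ - C₀²/q² + h. -/

import Mathlib

/-- If `v` satisfies the Weierstrass cubic `(v')² = 4v³ - g₂v - g₃` with
`g₂ = (16/3)ω₀² - 4h`, `g₃ = 4C₀² - (8/3)ω₀h + (64/27)ω₀³`, and `q² = (2/3)ω₀ + v`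
with `q ≠ 0`, then `(q')² = -2ω₀q² + q⁴ - C₀²/q² + h`. -/
theorem stmt4 (ω₀ C₀ h : ℝ) (hω₀ : 0 < ω₀) (v w q qd : ℝ → ℂ)
    (hv : ∀ t : ℝ, HasDerivAt v (w t) t)
    (hcubic : ∀ t : ℝ, (w t) ^ 2 =
      4 * (v t) ^ 3 - (((16 / 3) * ω₀ ^ 2 - 4 * h : ℝ) : ℂ) * v t
        - ((4 * C₀ ^ 2 - (8 / 3) * ω₀ * h + (64 / 27) * ω₀ ^ 3 : ℝ) : ℂ))
    (hq : ∀ t : ℝ, (q t) ^ 2 = ((2 / 3 : ℝ) : ℂ) * (ω₀ : ℂ) + v t)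
    (hqd : ∀ t : ℝ, HasDerivAt q (qd t) t)
    (hne : ∀ t : ℝ, q t ≠ 0) :
    ∀ t : ℝ, (qd t) ^ 2 =
      -(2 * (ω₀ : ℂ)) * (q t) ^ 2 + (q t) ^ 4 - (C₀ : ℂ) ^ 2 / (q t) ^ 2 + (h : ℂ) := by
  intro t
  -- derivative of q² is 2 q qd, but also q² = const + v so its derivative is w
  have hder1 : HasDerivAt (fun s => (q s) ^ 2) (2 * q t * qd t) t := by
    have := (hqd t).mul (hqd t)
    have h2 : qd t * q t + q t * qd t = 2 * q t * qd t := by ring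
    simp only [sq]; rw [← h2]; exact this
  have hder2 : HasDerivAt (fun s => (q s) ^ 2) (w t) t := by
    have : HasDerivAt (fun s => ((2 / 3 : ℝ) : ℂ) * (ω₀ : ℂ) + v s) (w t) t :=
      (hv t).const_add _
    exact (this.congr_deriv rfl).congr_of_eventuallyEq (by
      filter_upwards with s using (hq s))
  have hkey : 2 * q t * qd t = w t := hder1.unique hder2
  have hv' : v t = (q t) ^ 2 - ((2 / 3 : ℝ) : ℂ) * (ω₀ : ℂ) := by
    rw [hq t]; ring
  have hsq : (2 * q t * qd t) ^ 2 = (w t) ^ 2 := by rw [hkey]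
  rw [hcubic t, hv'] at hsq
  have hq2 : (q t) ^ 2 ≠ 0 := pow_ne_zero _ (hne t)
  field_simp [hne t]
  push_cast at hsq ⊢
  linear_combination hsq / 4
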